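/- arXiv:1904.02988 — 2 statements merged into one kernel-verified Lean document; each statement's English description precedes it below -/
import Mathlib

section
/- Let m ≥ 2, 1 ≤ p ≤ q < ∞, and 1 ≤ pᵢ ≤ qᵢ < ∞ for i = 1, …, m. Suppose 1/p* := Σ_{i=1}^m 1/pᵢ ≤ 1/p and Σ_{i=1}^m 1/qᵢ = 1/q. Then for all measurable functions fᵢ ∈ w𝓜^{pᵢ}_{qᵢ}(ℝⁿ), i = 1, …, m, one has ‖∏_{i=1}^m fᵢ‖_{w𝓜^p_q} ≤ ∏_{i=1}^m (pᵢ/p*)^{1/pᵢ} · ∏_{i=1}^m ‖fᵢ‖_{w𝓜^{pᵢ}_{qᵢ}}. -/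
open MeasureTheory ENNReal

/-- The weak Lebesgue `L^{p,∞}(B)` quasinorm of `f` on a set `B ⊆ ℝⁿ`:
`sup_{γ>0} γ · |{x ∈ B : |f x| > γ}|^{1/p}`. -/
noncomputable def weakLpNorm {n : ℕ} (p : ℝ) (B : Set (Fin n → ℝ))
    (f : (Fin n → ℝ) → ℝ) : ℝ≥0∞ :=
  ⨆ γ : Set.Ioi (0 : ℝ),
    ENNReal.ofReal γ.1 * (volume {x ∈ B | γ.1 < |f x|}) ^ (1 / p)

/-- The weak Morrey `w𝓜^p_q(ℝⁿ)` quasinorm of `f`: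
`sup_{B = B(a,r), γ>0} |B|^{1/q - 1/p} · γ · |{x ∈ B : |f x| > γ}|^{1/p}`. -/
noncomputable def weakMorreyNorm {n : ℕ} (p q : ℝ) (f : (Fin n → ℝ) → ℝ) : ℝ≥0∞ :=
  ⨆ (a : Fin n → ℝ) (r : Set.Ioi (0 : ℝ)),
    (volume (Metric.ball a r.1)) ^ (1 / q - 1 / p) * weakLpNorm p (Metric.ball a r.1) f

private lemma ennreal_rpow_finset_sum {ι : Type*} (s : Finset ι) (x : ℝ≥0∞)
    (hx : x ≠ 0) (hx' : x ≠ ⊤) (g : ι → ℝ) :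
    x ^ (∑ i ∈ s, g i) = ∏ i ∈ s, x ^ g i := by
  induction s using Finset.cons_induction with
  | empty => simp
  | cons i s hi ih => rw [Finset.sum_cons, Finset.prod_cons, ENNReal.rpow_add _ _ hx hx', ih]

/-- Generalized Hölder's inequality in weak Morrey spaces with a sharper bound:
if `1/p* = Σ 1/pᵢ ≤ 1/p` and `Σ 1/qᵢ = 1/q`, then
`‖∏ fᵢ‖_{w𝓜^p_q} ≤ ∏ (pᵢ/p*)^{1/pᵢ} ∏ ‖fᵢ‖_{w𝓜^{pᵢ}_{qᵢ}}`. -/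
theorem holder_weakMorrey_sharp {n : ℕ} (m : ℕ) (hm : 2 ≤ m)
    (p q pstar : ℝ) (hp : 1 ≤ p) (hpq : p ≤ q)
    (P Q : Fin m → ℝ) (hP : ∀ i, 1 ≤ P i) (hPQ : ∀ i, P i ≤ Q i)
    (hpstar : 1 / pstar = ∑ i, 1 / P i)
    (hsumP : ∑ i, 1 / P i ≤ 1 / p)
    (hsumQ : ∑ i, 1 / Q i = 1 / q)
    (f : Fin m → (Fin n → ℝ) → ℝ) (hf : ∀ i, Measurable (f i))
    (hmem : ∀ i, weakMorreyNorm (P i) (Q i) (f i) < ∞) :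
    weakMorreyNorm p q (fun x => ∏ i, f i x) ≤
      (∏ i, ENNReal.ofReal ((P i / pstar) ^ (1 / P i))) *
        ∏ i, weakMorreyNorm (P i) (Q i) (f i) := by
  have hm0 : 0 < m := lt_of_lt_of_le two_pos hm
  haveI : Nonempty (Fin m) := ⟨⟨0, hm0⟩⟩
  have hPpos : ∀ i, 0 < P i := fun i => lt_of_lt_of_le one_pos (hP i)
  have hppos : 0 < p := lt_of_lt_of_le one_pos hp
  have hsum_pos : 0 < ∑ i : Fin m, 1 / P i :=
    Finset.sum_pos (fun i _ => one_div_pos.mpr (hPpos i)) Finset.univ_nonempty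
  have hpstar_pos : 0 < pstar := one_div_pos.mp (by rw [hpstar]; exact hsum_pos)
  set C : ℝ := ∏ i, (P i / pstar) ^ (1 / P i) with hCdef
  have hC : 0 < C :=
    Finset.prod_pos fun i _ => Real.rpow_pos_of_pos (div_pos (hPpos i) hpstar_pos) _
  have hRHSC : (∏ i, ENNReal.ofReal ((P i / pstar) ^ (1 / P i))) = ENNReal.ofReal C := by
    rw [hCdef, ENNReal.ofReal_prod_of_nonneg]
    intro i _
    exact Real.rpow_nonneg (div_nonneg (hPpos i).le hpstar_pos.le) _
  rw [weakMorreyNorm]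
  refine iSup_le fun a => iSup_le fun r => ?_
  set B := Metric.ball a r.1 with hBdef
  have hr : (0:ℝ) < r.1 := r.2
  have hB0 : volume B ≠ 0 := (Metric.measure_ball_pos volume a hr).ne'
  have hBt : volume B ≠ ⊤ := measure_ball_lt_top.ne
  rw [weakLpNorm, ENNReal.mul_iSup]
  refine iSup_le fun γ => ?_
  have hγ : (0:ℝ) < γ.1 := γ.2
  set N : Fin m → ℝ≥0∞ := fun i => weakLpNorm (P i) B (f i) with hNdef
  have hNle : ∀ i, volume B ^ (1 / Q i - 1 / P i) * N i ≤ weakMorreyNorm (P i) (Q i) (f i) := by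
    intro i
    rw [weakMorreyNorm]
    exact le_iSup_of_le a (le_iSup_of_le r le_rfl)
  have hNfin : ∀ i, N i ≠ ⊤ := by
    intro i hN
    have h := hNle i
    rw [hN, ENNReal.mul_top (ENNReal.rpow_pos (pos_iff_ne_zero.mpr hB0) hBt).ne'] at h
    exact (hmem i).ne (top_le_iff.mp h)
  by_cases hNz : ∀ i, N i ≠ 0
  · -- main case
    set ν : Fin m → ℝ := fun i => (N i).toReal with hνdef
    have hν : ∀ i, 0 < ν i := fun i => ENNReal.toReal_pos (hNz i) (hNfin i)
    have hNν : ∀ i, N i = ENNReal.ofReal (ν i) := fun i => (ENNReal.ofReal_toReal (hNfin i)).symm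
    have hprodν : (0:ℝ) < ∏ i, ν i := Finset.prod_pos fun i _ => hν i
    set t : ℝ := ((C * ∏ i, ν i) / γ.1) ^ pstar with htdef
    have ht : 0 < t := Real.rpow_pos_of_pos (by positivity) _
    have hts : t ^ (1 / pstar) = (C * ∏ i, ν i) / γ.1 := by
      rw [htdef, ← Real.rpow_mul (by positivity), mul_one_div, div_self hpstar_pos.ne',
        Real.rpow_one]
    set γi : Fin m → ℝ := fun i => ν i * (P i / (pstar * t)) ^ (1 / P i) with hγidef
    have hγi : ∀ i, 0 < γi i := fun i =>
      mul_pos (hν i) (Real.rpow_pos_of_pos (div_pos (hPpos i) (mul_pos hpstar_pos ht)) _)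
    have hprodγ : ∏ i, γi i = γ.1 := by
      calc ∏ i, γi i
          = (∏ i, ν i) * ∏ i, ((P i / pstar) ^ (1 / P i) * (t⁻¹) ^ (1 / P i)) := by
            rw [← Finset.prod_mul_distrib]
            refine Finset.prod_congr rfl fun i _ => ?_
            show ν i * (P i / (pstar * t)) ^ (1 / P i) = _
            rw [← Real.mul_rpow (div_nonneg (hPpos i).le hpstar_pos.le) (inv_nonneg.mpr ht.le),
              show P i / pstar * t⁻¹ = P i / (pstar * t) by field_simp]
        _ = (∏ i, ν i) * (C * (t⁻¹) ^ (1 / pstar)) := by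
            rw [Finset.prod_mul_distrib, ← Real.rpow_sum_of_pos (inv_pos.mpr ht), ← hpstar,
              hCdef]
        _ = γ.1 := by
            rw [Real.inv_rpow ht.le, hts, inv_div]
            field_simp
    have hvoli : ∀ i, volume {x ∈ B | γi i < |f i x|} ≤ ENNReal.ofReal (pstar * t / P i) := by
      intro i
      have h1 : ENNReal.ofReal (γi i) * volume {x ∈ B | γi i < |f i x|} ^ (1 / P i) ≤ N i :=
        le_iSup (fun γ' : Set.Ioi (0:ℝ) =>
          ENNReal.ofReal γ'.1 * volume {x ∈ B | γ'.1 < |f i x|} ^ (1 / P i)) ⟨γi i, hγi i⟩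
      have hne0 : ENNReal.ofReal (γi i) ≠ 0 := (ENNReal.ofReal_pos.mpr (hγi i)).ne'
      have h2 : volume {x ∈ B | γi i < |f i x|} ^ (1 / P i) ≤ N i / ENNReal.ofReal (γi i) :=
        (ENNReal.le_div_iff_mul_le (Or.inl hne0) (Or.inl ENNReal.ofReal_ne_top)).mpr
          (by rwa [mul_comm] at h1)
      have h3 : volume {x ∈ B | γi i < |f i x|} ≤ (N i / ENNReal.ofReal (γi i)) ^ (P i) := by
        have h4 := ENNReal.rpow_le_rpow h2 (hPpos i).le
        rwa [← ENNReal.rpow_mul, one_div_mul_cancel (hPpos i).ne', ENNReal.rpow_one] at h4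
      refine h3.trans (le_of_eq ?_)
      rw [hNν i, ← ENNReal.ofReal_div_of_pos (hγi i),
        ENNReal.ofReal_rpow_of_pos (div_pos (hν i) (hγi i))]
      congr 1
      have hg : γi i ^ (P i) = ν i ^ (P i) * (P i / (pstar * t)) := by
        rw [hγidef]
        have hbase : (0:ℝ) ≤ P i / (pstar * t) := (div_pos (hPpos i) (mul_pos hpstar_pos ht)).le
        rw [Real.mul_rpow (hν i).le (Real.rpow_nonneg hbase _), ← Real.rpow_mul hbase,
          one_div_mul_cancel (hPpos i).ne', Real.rpow_one]
      have hνP : (0:ℝ) < ν i ^ (P i) := Real.rpow_pos_of_pos (hν i) _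
      rw [Real.div_rpow (hν i).le (hγi i).le, hg]
      field_simp [hνP.ne']
    have hvol : volume {x ∈ B | γ.1 < |∏ i, f i x|} ≤ ENNReal.ofReal t := by
      have hsub : {x ∈ B | γ.1 < |∏ i, f i x|} ⊆ ⋃ i, {x ∈ B | γi i < |f i x|} := by
        rintro x ⟨hxB, hx⟩
        by_contra hcon
        simp only [Set.mem_iUnion, Set.mem_setOf_eq, not_exists, not_and] at hcon
        have hle : |∏ i, f i x| ≤ ∏ i, γi i := by
          rw [Finset.abs_prod]
          exact Finset.prod_le_prod (fun i _ => abs_nonneg _)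
            (fun i _ => not_lt.mp (hcon i hxB))
        rw [hprodγ] at hle
        linarith
      calc volume {x ∈ B | γ.1 < |∏ i, f i x|}
          ≤ ∑ i, volume {x ∈ B | γi i < |f i x|} := by
            refine (measure_mono hsub).trans ?_
            exact measure_iUnion_fintype_le _ _
        _ ≤ ∑ i, ENNReal.ofReal (pstar * t / P i) := Finset.sum_le_sum fun i _ => hvoli i
        _ = ENNReal.ofReal (∑ i, pstar * t / P i) :=
            (ENNReal.ofReal_sum_of_nonneg fun i _ => div_nonneg (mul_pos hpstar_pos ht).le (hPpos i).le).symm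
        _ = ENNReal.ofReal t := by
            congr 1
            have : ∑ i, pstar * t / P i = (pstar * t) * ∑ i, 1 / P i := by
              rw [Finset.mul_sum]
              exact Finset.sum_congr rfl fun i _ => by field_simp
            rw [this, ← hpstar]
            field_simp
    have hkey : ENNReal.ofReal γ.1 * volume {x ∈ B | γ.1 < |∏ i, f i x|} ^ (1 / pstar)
        ≤ ENNReal.ofReal C * ∏ i, N i := by
      calc ENNReal.ofReal γ.1 * volume {x ∈ B | γ.1 < |∏ i, f i x|} ^ (1 / pstar)
          ≤ ENNReal.ofReal γ.1 * (ENNReal.ofReal t) ^ (1 / pstar) :=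
            mul_le_mul_right (ENNReal.rpow_le_rpow hvol (one_div_nonneg.mpr hpstar_pos.le)) _
        _ = ENNReal.ofReal (γ.1 * t ^ (1 / pstar)) := by
            rw [ENNReal.ofReal_rpow_of_pos ht, ← ENNReal.ofReal_mul hγ.le]
        _ = ENNReal.ofReal (C * ∏ i, ν i) := by
            rw [hts]
            congr 1
            field_simp
        _ = ENNReal.ofReal C * ∏ i, N i := by
            rw [ENNReal.ofReal_mul hC.le,
              ENNReal.ofReal_prod_of_nonneg (fun i _ => (hν i).le)]
            congr 1
            exact Finset.prod_congr rfl fun i _ => (hNν i).symm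
    -- assembly
    by_cases hv0 : volume {x ∈ B | γ.1 < |∏ i, f i x|} = 0
    · rw [hv0, ENNReal.zero_rpow_of_pos (one_div_pos.mpr hppos)]
      simp
    · have hvt : volume {x ∈ B | γ.1 < |∏ i, f i x|} ≠ ⊤ :=
        ((measure_mono (Set.sep_subset _ _)).trans_lt (lt_top_iff_ne_top.mpr hBt)).ne
      have hsplit : volume {x ∈ B | γ.1 < |∏ i, f i x|} ^ (1 / p)
          = volume {x ∈ B | γ.1 < |∏ i, f i x|} ^ (1 / pstar)
            * volume {x ∈ B | γ.1 < |∏ i, f i x|} ^ (1 / p - 1 / pstar) := by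
        rw [← ENNReal.rpow_add _ _ hv0 hvt]
        congr 1
        ring
      have hps_le : 1 / pstar ≤ 1 / p := by rw [hpstar]; exact hsumP
      have hmono : volume {x ∈ B | γ.1 < |∏ i, f i x|} ^ (1 / p - 1 / pstar)
          ≤ (volume B) ^ (1 / p - 1 / pstar) :=
        ENNReal.rpow_le_rpow (measure_mono (Set.sep_subset _ _)) (by linarith)
      calc volume B ^ (1 / q - 1 / p)
            * (ENNReal.ofReal γ.1 * volume {x ∈ B | γ.1 < |∏ i, f i x|} ^ (1 / p))
          = volume B ^ (1 / q - 1 / p)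
            * volume {x ∈ B | γ.1 < |∏ i, f i x|} ^ (1 / p - 1 / pstar)
            * (ENNReal.ofReal γ.1 * volume {x ∈ B | γ.1 < |∏ i, f i x|} ^ (1 / pstar)) := by
            rw [hsplit]; ring
        _ ≤ volume B ^ (1 / q - 1 / p) * volume B ^ (1 / p - 1 / pstar)
            * (ENNReal.ofReal C * ∏ i, N i) :=
            mul_le_mul' (mul_le_mul_right hmono _) hkey
        _ = ENNReal.ofReal C * (volume B ^ (1 / q - 1 / pstar) * ∏ i, N i) := by
            rw [← ENNReal.rpow_add _ _ hB0 hBt]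
            rw [show 1 / q - 1 / p + (1 / p - 1 / pstar) = 1 / q - 1 / pstar by ring]
            ring
        _ = ENNReal.ofReal C * ∏ i, (volume B ^ (1 / Q i - 1 / P i) * N i) := by
            rw [Finset.prod_mul_distrib,
              ← ennreal_rpow_finset_sum _ _ hB0 hBt]
            rw [show ∑ i, (1 / Q i - 1 / P i) = 1 / q - 1 / pstar by
              rw [Finset.sum_sub_distrib, hsumQ, ← hpstar]]
        _ ≤ ENNReal.ofReal C * ∏ i, weakMorreyNorm (P i) (Q i) (f i) :=
            mul_le_mul_right (Finset.prod_le_prod' fun i _ => hNle i) _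
        _ = (∏ i, ENNReal.ofReal ((P i / pstar) ^ (1 / P i)))
            * ∏ i, weakMorreyNorm (P i) (Q i) (f i) := by rw [hRHSC]
  · -- some N i = 0
    push_neg at hNz
    obtain ⟨i₀, hi₀⟩ := hNz
    have hvol0 : ∀ δ : ℝ, 0 < δ → volume {x ∈ B | δ < |f i₀ x|} = 0 := by
      intro δ hδ
      have h1 : ENNReal.ofReal δ * volume {x ∈ B | δ < |f i₀ x|} ^ (1 / P i₀) ≤ N i₀ :=
        le_iSup (fun γ' : Set.Ioi (0:ℝ) =>
          ENNReal.ofReal γ'.1 * volume {x ∈ B | γ'.1 < |f i₀ x|} ^ (1 / P i₀)) ⟨δ, hδ⟩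
      rw [hi₀, le_zero_iff, mul_eq_zero] at h1
      rcases h1 with h1 | h1
      · exact absurd h1 (ENNReal.ofReal_pos.mpr hδ).ne'
      · rcases ENNReal.rpow_eq_zero_iff.mp h1 with ⟨h, _⟩ | ⟨_, h⟩
        · exact h
        · exfalso
          have : (0:ℝ) < 1 / P i₀ := one_div_pos.mpr (hPpos i₀)
          linarith
    have hnull : volume {x ∈ B | γ.1 < |∏ i, f i x|} = 0 := by
      refine measure_mono_null ?_
        (measure_iUnion_null fun k : ℕ => hvol0 (1 / (k + 1)) (by positivity))
      rintro x ⟨hxB, hx⟩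
      have hne : (∏ i, f i x) ≠ 0 := by
        intro h
        rw [h, abs_zero] at hx
        linarith
      have h0 : 0 < |f i₀ x| :=
        abs_pos.mpr (Finset.prod_ne_zero_iff.mp hne i₀ (Finset.mem_univ _))
      obtain ⟨k, hk⟩ := exists_nat_one_div_lt h0
      exact Set.mem_iUnion.mpr ⟨k, hxB, hk⟩
    rw [hnull, ENNReal.zero_rpow_of_pos (one_div_pos.mpr hppos)]
    simp
end

section
/- Let m ≥ 2 and 1 ≤ pᵢ ≤ qᵢ < ∞ for i = 1, …, m. Set 1/p* := Σ_{i=1}^m 1/pᵢ and 1/q := Σ_{i=1}^m 1/qᵢ, and assume 1 ≤ p* ≤ q < ∞. Then for all measurable functions fᵢ ∈ w𝓜^{pᵢ}_{qᵢ}(ℝⁿ), i = 1, …, m, one has ‖∏_{i=1}^m fᵢ‖_{w𝓜^{p*}_q} ≤ ∏_{i=1}^m (pᵢ/p*)^{1/pᵢ} · ∏_{i=1}^m ‖fᵢ‖_{w𝓜^{pᵢ}_{qᵢ}}. -/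
open MeasureTheory ENNReal

lemma ennreal_rpow_sum {ι : Type*} (x : ℝ≥0∞) (hx : x ≠ 0) (hx' : x ≠ ∞)
    (s : Finset ι) (c : ι → ℝ) : x ^ (∑ i ∈ s, c i) = ∏ i ∈ s, x ^ c i := by
  induction s using Finset.cons_induction with
  | empty => simp
  | cons a s ha ih => rw [Finset.sum_cons, Finset.prod_cons, ENNReal.rpow_add _ _ hx hx', ih]


lemma real_rpow_sum {ι : Type*} {x : ℝ} (hx : 0 < x)
    (s : Finset ι) (c : ι → ℝ) : x ^ (∑ i ∈ s, c i) = ∏ i ∈ s, x ^ c i := by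
  induction s using Finset.cons_induction with
  | empty => simp
  | cons a s ha ih => rw [Finset.sum_cons, Finset.prod_cons, Real.rpow_add hx, ih]

lemma weakLp_chebyshev {n : ℕ} {p : ℝ} (hp : 0 < p) (B : Set (Fin n → ℝ))
    (f : (Fin n → ℝ) → ℝ) {t : ℝ} (ht : 0 < t) :
    volume {x ∈ B | t < |f x|} ≤ (weakLpNorm p B f / ENNReal.ofReal t) ^ p := by
  have h1 : ENNReal.ofReal t * (volume {x ∈ B | t < |f x|}) ^ (1/p) ≤ weakLpNorm p B f :=
    le_iSup (fun γ : Set.Ioi (0:ℝ) =>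
      ENNReal.ofReal γ.1 * (volume {x ∈ B | γ.1 < |f x|}) ^ (1/p)) ⟨t, ht⟩
  have h2 : (volume {x ∈ B | t < |f x|}) ^ (1/p) ≤ weakLpNorm p B f / ENNReal.ofReal t := by
    rw [ENNReal.le_div_iff_mul_le (Or.inl (by simp [ht])) (Or.inl ofReal_ne_top)]
    rwa [mul_comm]
  calc volume {x ∈ B | t < |f x|} = ((volume {x ∈ B | t < |f x|}) ^ (1/p)) ^ p := by
        rw [← ENNReal.rpow_mul, one_div, inv_mul_cancel₀ hp.ne', ENNReal.rpow_one]
    _ ≤ _ := ENNReal.rpow_le_rpow h2 hp.le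

lemma weakLp_zero_set {n : ℕ} {p : ℝ} (hp : 0 < p) (B : Set (Fin n → ℝ))
    (f : (Fin n → ℝ) → ℝ) (h : weakLpNorm p B f = 0) :
    volume {x ∈ B | 0 < |f x|} = 0 := by
  have key : ∀ t : ℝ, 0 < t → volume {x ∈ B | t < |f x|} = 0 := by
    intro t ht
    have := weakLp_chebyshev hp B f ht
    rw [h] at this
    simpa [ENNReal.zero_rpow_of_pos hp, ENNReal.zero_div] using this
  have hsub : {x ∈ B | 0 < |f x|} ⊆ ⋃ k : ℕ, {x ∈ B | 1/(k+1 : ℝ) < |f x|} := by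
    rintro x ⟨hxB, hx⟩
    obtain ⟨k, hk⟩ := exists_nat_one_div_lt hx
    exact Set.mem_iUnion.2 ⟨k, hxB, hk⟩
  refine le_antisymm ((measure_mono hsub).trans ((measure_iUnion_le _).trans ?_)) (zero_le)
  have : ∀ k : ℕ, volume {x ∈ B | 1/(k+1 : ℝ) < |f x|} = 0 := fun k =>
    key _ (by positivity)
  simpa [one_div] using this

lemma local_holder {n m : ℕ} (P : Fin m → ℝ) (hP : ∀ i, 1 ≤ P i) {pstar : ℝ}
    (hps : 0 < pstar) (hpstar : 1 / pstar = ∑ i, 1 / P i)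
    (B : Set (Fin n → ℝ)) (f : Fin m → (Fin n → ℝ) → ℝ)
    (hfin : ∀ i, weakLpNorm (P i) B (f i) ≠ ∞) :
    weakLpNorm pstar B (fun x => ∏ i, f i x) ≤
      (∏ i, ENNReal.ofReal ((P i / pstar) ^ (1 / P i))) *
        ∏ i, weakLpNorm (P i) B (f i) := by
  have hPpos : ∀ i, 0 < P i := fun i => lt_of_lt_of_le one_pos (hP i)
  refine iSup_le ?_
  rintro ⟨γ, hγ⟩
  rw [Set.mem_Ioi] at hγ
  show ENNReal.ofReal γ * (volume {x ∈ B | γ < |∏ i, f i x|}) ^ (1/pstar) ≤ _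
  by_cases h0 : ∀ i, weakLpNorm (P i) B (f i) ≠ 0
  · set N : Fin m → ℝ≥0∞ := fun i => weakLpNorm (P i) B (f i) with hN_def
    set c : Fin m → ℝ := fun i => (N i).toReal with hc_def
    have hc : ∀ i, 0 < c i := fun i => ENNReal.toReal_pos (h0 i) (hfin i)
    have hNc : ∀ i, N i = ENNReal.ofReal (c i) := fun i => (ENNReal.ofReal_toReal (hfin i)).symm
    set A : ℝ := ((∏ i, (P i) ^ (1 / P i)) * ∏ i, c i) / γ with hA_def
    have hA : 0 < A :=
      div_pos (mul_pos (Finset.prod_pos fun i _ => Real.rpow_pos_of_pos (hPpos i) _)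
        (Finset.prod_pos fun i _ => hc i)) hγ
    set t : Fin m → ℝ := fun i => c i * ((P i) ^ (1 / P i) * A ^ (-(pstar / P i))) with ht_def
    have ht : ∀ i, 0 < t i := fun i => mul_pos (hc i)
      (mul_pos (Real.rpow_pos_of_pos (hPpos i) _) (Real.rpow_pos_of_pos hA _))
    have hprod_t : ∏ i, t i = γ := by
      have h1 : ∏ i, A ^ (-(pstar / P i)) = A ^ (-(1:ℝ)) := by
        rw [← real_rpow_sum hA]
        congr 1
        have : ∑ i, -(pstar / P i) = -(pstar * ∑ i, 1 / P i) := by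
          rw [Finset.mul_sum, ← Finset.sum_neg_distrib]
          exact Finset.sum_congr rfl fun i _ => by rw [mul_one_div]
        rw [this, ← hpstar, mul_one_div, div_self hps.ne']
      rw [ht_def]
      simp only
      rw [Finset.prod_mul_distrib, Finset.prod_mul_distrib, h1, Real.rpow_neg_one, hA_def]
      have hX : (0:ℝ) < (∏ i, (P i) ^ (1/P i)) * ∏ i, c i :=
        mul_pos (Finset.prod_pos fun i _ => Real.rpow_pos_of_pos (hPpos i) _)
          (Finset.prod_pos fun i _ => hc i)
      field_simp
      have hc0 : (∏ i, c i) ≠ 0 := (Finset.prod_pos fun i _ => hc i).ne'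
      have hp0 : (∏ i, (P i) ^ (1/P i)) ≠ 0 :=
        (Finset.prod_pos fun i _ => Real.rpow_pos_of_pos (hPpos i) _).ne'
      field_simp
    have hterm : ∀ i, (c i / t i) ^ (P i) = A ^ pstar * (1 / P i) := by
      intro i
      have h1 : c i / t i = (P i) ^ (-(1/P i)) * A ^ (pstar / P i) := by
        have hu : t i = c i * ((P i) ^ (1/P i) * A ^ (-(pstar / P i))) := rfl
        rw [hu, Real.rpow_neg (hPpos i).le, Real.rpow_neg hA.le]
        field_simp
        rw [div_mul_eq_div_div, div_self (hc i).ne']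
      rw [h1, Real.mul_rpow (Real.rpow_nonneg (hPpos i).le _) (Real.rpow_nonneg hA.le _),
        ← Real.rpow_mul (hPpos i).le, ← Real.rpow_mul hA.le]
      have e1 : (-(1/P i)) * P i = -1 := by
        rw [neg_mul, one_div, inv_mul_cancel₀ (hPpos i).ne']
      have e2 : (pstar / P i) * P i = pstar := div_mul_cancel₀ pstar (hPpos i).ne'
      rw [e1, e2, Real.rpow_neg_one, mul_comm, one_div]
    have hcheb : ∀ i, volume {x ∈ B | t i < |f i x|} ≤ ENNReal.ofReal ((c i / t i) ^ (P i)) := by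
      intro i
      refine (weakLp_chebyshev (hPpos i) B (f i) (ht i)).trans_eq ?_
      show (N i / ENNReal.ofReal (t i)) ^ P i = _
      rw [hNc i, ← ENNReal.ofReal_div_of_pos (ht i),
        ENNReal.ofReal_rpow_of_pos (div_pos (hc i) (ht i))]
    have hsub : {x ∈ B | γ < |∏ i, f i x|} ⊆ ⋃ i, {x ∈ B | t i < |f i x|} := by
      intro x hx
      by_contra hcon
      simp only [Set.mem_iUnion, Set.mem_setOf_eq, not_exists, not_and, not_lt] at hcon
      obtain ⟨hxB, hxγ⟩ := hx
      have hle : |∏ i, f i x| ≤ ∏ i, t i := by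
        rw [Finset.abs_prod]
        exact Finset.prod_le_prod (fun i _ => abs_nonneg _) (fun i _ => hcon i hxB)
      rw [hprod_t] at hle
      exact absurd hxγ (not_lt.2 hle)
    have hE : volume {x ∈ B | γ < |∏ i, f i x|} ≤ ENNReal.ofReal (A ^ pstar * (1/pstar)) := by
      calc volume {x ∈ B | γ < |∏ i, f i x|}
          ≤ ∑' i, volume {x ∈ B | t i < |f i x|} :=
            (measure_mono hsub).trans (measure_iUnion_le _)
        _ = ∑ i, volume {x ∈ B | t i < |f i x|} := tsum_fintype _
        _ ≤ ∑ i, ENNReal.ofReal ((c i / t i) ^ (P i)) := Finset.sum_le_sum fun i _ => hcheb i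
        _ = ENNReal.ofReal (∑ i, (c i / t i) ^ (P i)) :=
            (ENNReal.ofReal_sum_of_nonneg fun i _ =>
              Real.rpow_nonneg (div_pos (hc i) (ht i)).le _).symm
        _ = ENNReal.ofReal (A ^ pstar * (1/pstar)) := by
            congr 1
            rw [Finset.sum_congr rfl fun i _ => hterm i, ← Finset.mul_sum, ← hpstar]
    calc ENNReal.ofReal γ * (volume {x ∈ B | γ < |∏ i, f i x|}) ^ (1/pstar)
        ≤ ENNReal.ofReal γ * (ENNReal.ofReal (A ^ pstar * (1/pstar))) ^ (1/pstar) :=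
          mul_le_mul_right (ENNReal.rpow_le_rpow hE (by positivity)) _
      _ = ENNReal.ofReal (γ * (A ^ pstar * (1/pstar)) ^ (1/pstar)) := by
          rw [ENNReal.ofReal_rpow_of_pos (by positivity), ← ENNReal.ofReal_mul hγ.le]
      _ = ENNReal.ofReal ((∏ i, (P i / pstar) ^ (1/P i)) * ∏ i, c i) := by
          congr 1
          have e1 : (A ^ pstar * (1/pstar)) ^ (1/pstar) = A * pstar ^ (-(1/pstar)) := by
            rw [Real.mul_rpow (Real.rpow_nonneg hA.le _) (by positivity),
              ← Real.rpow_mul hA.le, mul_one_div, div_self hps.ne', Real.rpow_one]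
            congr 1
            rw [one_div pstar, Real.inv_rpow hps.le, ← Real.rpow_neg hps.le]
          have e2 : ∏ i, (P i / pstar) ^ (1/P i) =
              (∏ i, (P i) ^ (1/P i)) * pstar ^ (-(1/pstar)) := by
            have h3 : ∀ i ∈ Finset.univ, (P i / pstar) ^ (1/P i) =
                (P i)^(1/P i) * pstar ^ (-(1/P i)) := fun i _ => by
              rw [Real.div_rpow (hPpos i).le hps.le, Real.rpow_neg hps.le, div_eq_mul_inv]
            rw [Finset.prod_congr rfl h3, Finset.prod_mul_distrib, ← real_rpow_sum hps,
              Finset.sum_neg_distrib, ← hpstar]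
          rw [e1, e2, hA_def]
          field_simp
      _ = (∏ i, ENNReal.ofReal ((P i / pstar) ^ (1/P i))) * ∏ i, N i := by
          rw [ENNReal.ofReal_mul (Finset.prod_nonneg fun i _ =>
              Real.rpow_nonneg (div_pos (hPpos i) hps).le _),
            ENNReal.ofReal_prod_of_nonneg fun i _ =>
              Real.rpow_nonneg (div_pos (hPpos i) hps).le _,
            ENNReal.ofReal_prod_of_nonneg fun i _ => (hc i).le]
          congr 1
          exact Finset.prod_congr rfl fun i _ => (hNc i).symm
      _ = _ := rfl
  · push_neg at h0
    obtain ⟨i, hi⟩ := h0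
    have hsub : {x ∈ B | γ < |∏ j, f j x|} ⊆ {x ∈ B | 0 < |f i x|} := by
      rintro x ⟨hxB, hx⟩
      refine ⟨hxB, abs_pos.2 fun h => ?_⟩
      rw [Finset.prod_eq_zero (Finset.mem_univ i) h] at hx
      simp at hx
      exact absurd hx (not_lt.2 hγ.le)
    have hvol : volume {x ∈ B | γ < |∏ j, f j x|} = 0 :=
      le_antisymm ((measure_mono hsub).trans_eq (weakLp_zero_set (hPpos i) B (f i) hi))
        (zero_le)
    rw [hvol, ENNReal.zero_rpow_of_pos (by positivity), mul_zero]
    exact zero_le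

/-- Generalized Hölder's inequality in weak Morrey spaces at the critical exponent:
with `1/p* = Σ 1/pᵢ`, `1/q = Σ 1/qᵢ`, and `1 ≤ p* ≤ q < ∞`,
`‖∏ fᵢ‖_{w𝓜^{p*}_q} ≤ ∏ (pᵢ/p*)^{1/pᵢ} ∏ ‖fᵢ‖_{w𝓜^{pᵢ}_{qᵢ}}`. -/
theorem holder_weakMorrey_critical {n : ℕ} (m : ℕ) (hm : 2 ≤ m)
    (P Q : Fin m → ℝ) (hP : ∀ i, 1 ≤ P i) (hPQ : ∀ i, P i ≤ Q i)
    (pstar q : ℝ)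
    (hpstar : 1 / pstar = ∑ i, 1 / P i)
    (hq : 1 / q = ∑ i, 1 / Q i)
    (h1p : 1 ≤ pstar) (hpq : pstar ≤ q)
    (f : Fin m → (Fin n → ℝ) → ℝ) (hf : ∀ i, Measurable (f i))
    (hmem : ∀ i, weakMorreyNorm (P i) (Q i) (f i) < ∞) :
    weakMorreyNorm pstar q (fun x => ∏ i, f i x) ≤
      (∏ i, ENNReal.ofReal ((P i / pstar) ^ (1 / P i))) *
        ∏ i, weakMorreyNorm (P i) (Q i) (f i) := by
  have hps : 0 < pstar := lt_of_lt_of_le one_pos h1p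
  refine iSup_le fun a => iSup_le fun r => ?_
  have hr : (0:ℝ) < r.1 := r.2
  set B := Metric.ball a r.1 with hB
  set V := volume B with hV_def
  have hV0 : V ≠ 0 := (Metric.measure_ball_pos volume a hr).ne'
  have hVtop : V ≠ ∞ := measure_ball_lt_top.ne
  have hterm : ∀ i, V ^ (1/Q i - 1/P i) * weakLpNorm (P i) B (f i) ≤
      weakMorreyNorm (P i) (Q i) (f i) := fun i =>
    le_iSup_of_le a (le_iSup_of_le r le_rfl)
  have hVe : ∀ e : ℝ, V ^ e ≠ 0 := by
    intro e
    simp [ENNReal.rpow_eq_zero_iff, hV0, hVtop]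
  have hfin : ∀ i, weakLpNorm (P i) B (f i) ≠ ∞ := by
    intro i hcon
    have h2 := hterm i
    rw [hcon, ENNReal.mul_top (hVe _)] at h2
    exact (hmem i).ne (top_le_iff.1 h2)
  have hlocal := local_holder P hP hps hpstar B f hfin
  calc V ^ (1/q - 1/pstar) * weakLpNorm pstar B (fun x => ∏ i, f i x)
      ≤ V ^ (1/q - 1/pstar) *
        ((∏ i, ENNReal.ofReal ((P i / pstar) ^ (1/P i))) *
          ∏ i, weakLpNorm (P i) B (f i)) := mul_le_mul_right hlocal _
    _ = (∏ i, ENNReal.ofReal ((P i / pstar) ^ (1/P i))) *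
        ∏ i, (V ^ (1/Q i - 1/P i) * weakLpNorm (P i) B (f i)) := by
        rw [Finset.prod_mul_distrib,
          show 1/q - 1/pstar = ∑ i, (1/Q i - 1/P i) by
            rw [hq, hpstar, Finset.sum_sub_distrib],
          ennreal_rpow_sum V hV0 hVtop]
        ring
    _ ≤ (∏ i, ENNReal.ofReal ((P i / pstar) ^ (1/P i))) *
        ∏ i, weakMorreyNorm (P i) (Q i) (f i) :=
        mul_le_mul_right (Finset.prod_le_prod' fun i _ => hterm i) _
end
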